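/- Consider one step of gradient descent on L(W₁,W₂) = ℓ(W₁W₂ᵀ): W₁⁺ = W₁ − η ∇ℓ(W)W₂ and W₂⁺ = W₂ − η ∇ℓ(W)ᵀW₁, where W = W₁W₂ᵀ. Then the imbalance D = W₁ᵀW₁ − W₂ᵀW₂ evolves as D⁺ − D = η² (W₂ᵀ∇ℓ(W)ᵀ∇ℓ(W)W₂ − W₁ᵀ∇ℓ(W)ᵀ∇ℓ(W)W₁). In particular, ‖D⁺ − D‖_F ≤ η² (σ_max(W₁)² + σ_max(W₂)²) ‖∇ℓ(W)‖_F². -/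

import Mathlib

open Matrix

/-- Frobenius norm of a real matrix. -/
noncomputable def fro {a b : ℕ} (A : Matrix (Fin a) (Fin b) ℝ) : ℝ :=
  Real.sqrt (∑ i, ∑ j, (A i j) ^ 2)

/-- Frobenius (trace) inner product of two real matrices. -/
noncomputable def ip {a b : ℕ} (A B : Matrix (Fin a) (Fin b) ℝ) : ℝ :=
  ∑ i, ∑ j, A i j * B i j

/-- Square of the largest singular value of `A`: largest eigenvalue of `Aᴴ * A`. -/
noncomputable def smaxSq {a b : ℕ} (A : Matrix (Fin a) (Fin b) ℝ) : ℝ :=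
  ⨆ i, (Matrix.isHermitian_conjTranspose_mul_self A).eigenvalues i

/-- Square of the smallest singular value of `A` (as the smallest eigenvalue of `Aᴴ * A`;
zero when `A` is rank-deficient as a map out of its column space). -/
noncomputable def sminSq {a b : ℕ} (A : Matrix (Fin a) (Fin b) ℝ) : ℝ :=
  ⨅ i, (Matrix.isHermitian_conjTranspose_mul_self A).eigenvalues i

/-- Square of the largest singular value via `A * Aᴴ`. -/
noncomputable def smaxSqR {a b : ℕ} (A : Matrix (Fin a) (Fin b) ℝ) : ℝ :=
  ⨆ i, (Matrix.isHermitian_mul_conjTranspose_self A).eigenvalues i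

/-- Square of the smallest singular value via `A * Aᴴ` (the `min(a,b)`-th singular value
when `a ≤ b`). -/
noncomputable def sminSqR {a b : ℕ} (A : Matrix (Fin a) (Fin b) ℝ) : ℝ :=
  ⨅ i, (Matrix.isHermitian_mul_conjTranspose_self A).eigenvalues i

/-- Largest singular value. -/
noncomputable def smax {a b : ℕ} (A : Matrix (Fin a) (Fin b) ℝ) : ℝ :=
  Real.sqrt (smaxSq A)

attribute [local instance] Matrix.frobeniusSeminormedAddCommGroup Matrix.frobeniusNormedSpace

lemma fro_eq_norm {a b : ℕ} (A : Matrix (Fin a) (Fin b) ℝ) : fro A = ‖A‖ := by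
  rw [fro, Matrix.frobenius_norm_def, ← Real.sqrt_eq_rpow]
  congr 1
  refine Finset.sum_congr rfl fun i _ => Finset.sum_congr rfl fun j _ => ?_
  rw [Real.norm_eq_abs, Real.rpow_two, sq_abs]

lemma smaxSq_nonneg' {a b : ℕ} (A : Matrix (Fin a) (Fin b) ℝ) : 0 ≤ smaxSq A := by
  rcases isEmpty_or_nonempty (Fin b) with hb | hb
  · simp [smaxSq, Real.iSup_of_isEmpty]
  · obtain ⟨j⟩ := hb
    exact le_trans (Matrix.eigenvalues_conjTranspose_mul_self_nonneg A j)
      (le_ciSup (Set.Finite.bddAbove (Set.finite_range _)) j)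

lemma rayleigh {a b : ℕ} (A : Matrix (Fin a) (Fin b) ℝ) (y : Fin b → ℝ) :
    (A *ᵥ y) ⬝ᵥ (A *ᵥ y) ≤ smaxSq A * (y ⬝ᵥ y) := by
  classical
  have hM : (Aᴴ * A).IsHermitian := Matrix.isHermitian_conjTranspose_mul_self A
  set U : Matrix (Fin b) (Fin b) ℝ :=
    (Matrix.IsHermitian.eigenvectorUnitary hM : Matrix (Fin b) (Fin b) ℝ) with hUdef
  have hU1 : U * star U = 1 :=
    (Matrix.mem_unitaryGroup_iff).mp (Matrix.IsHermitian.eigenvectorUnitary hM).2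
  set ev := hM.eigenvalues with hev
  set z : Fin b → ℝ := star U *ᵥ y with hz
  have hstar : star U *ᵥ y = y ᵥ* U := by
    rw [Matrix.star_eq_conjTranspose, Matrix.conjTranspose_eq_transpose_of_trivial,
      Matrix.mulVec_transpose]
  have h1 : (A *ᵥ y) ⬝ᵥ (A *ᵥ y) = y ⬝ᵥ ((Aᴴ * A) *ᵥ y) := by
    conv_rhs => rw [Matrix.conjTranspose_eq_transpose_of_trivial, ← Matrix.mulVec_mulVec,
      Matrix.dotProduct_mulVec, Matrix.vecMul_transpose]
  have hdiag : (Matrix.diagonal (RCLike.ofReal ∘ ev) : Matrix (Fin b) (Fin b) ℝ)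
      = Matrix.diagonal ev := by
    congr 1
  have h2 : y ⬝ᵥ ((Aᴴ * A) *ᵥ y) = z ⬝ᵥ (Matrix.diagonal ev *ᵥ z) := by
    conv_lhs => rw [hM.spectral_theorem, Unitary.conjStarAlgAut_apply]
    rw [hdiag, ← Matrix.mulVec_mulVec, ← Matrix.mulVec_mulVec,
      Matrix.dotProduct_mulVec, ← hstar]
  have h3 : z ⬝ᵥ (Matrix.diagonal ev *ᵥ z) = ∑ j, ev j * z j ^ 2 := by
    simp only [dotProduct, Matrix.mulVec_diagonal]
    exact Finset.sum_congr rfl fun j _ => by ring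
  have h4 : z ⬝ᵥ z = y ⬝ᵥ y := by
    calc z ⬝ᵥ z = (y ᵥ* U) ⬝ᵥ (star U *ᵥ y) := by rw [← hstar, ← hz]
    _ = y ⬝ᵥ (U *ᵥ (star U *ᵥ y)) := (Matrix.dotProduct_mulVec _ _ _).symm
    _ = y ⬝ᵥ y := by rw [Matrix.mulVec_mulVec, hU1, Matrix.one_mulVec]
  calc (A *ᵥ y) ⬝ᵥ (A *ᵥ y) = ∑ j, ev j * z j ^ 2 := by rw [h1, h2, h3]
    _ ≤ ∑ j, smaxSq A * z j ^ 2 := Finset.sum_le_sum fun j _ =>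
        mul_le_mul_of_nonneg_right (le_ciSup (Set.Finite.bddAbove (Set.finite_range _)) j)
          (sq_nonneg _)
    _ = smaxSq A * (z ⬝ᵥ z) := by
        rw [← Finset.mul_sum]; congr 1
        exact Finset.sum_congr rfl fun j _ => by rw [sq]
    _ = smaxSq A * (y ⬝ᵥ y) := by rw [h4]

lemma quadT {a b : ℕ} (A : Matrix (Fin a) (Fin b) ℝ) (x : Fin a → ℝ) :
    (Aᵀ *ᵥ x) ⬝ᵥ (Aᵀ *ᵥ x) ≤ smaxSq A * (x ⬝ᵥ x) := by
  set y : Fin b → ℝ := Aᵀ *ᵥ x with hy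
  have h0 : (0:ℝ) ≤ y ⬝ᵥ y := Finset.sum_nonneg fun j _ => mul_self_nonneg _
  have hx0 : (0:ℝ) ≤ x ⬝ᵥ x := Finset.sum_nonneg fun j _ => mul_self_nonneg _
  have h1 : y ⬝ᵥ y = x ⬝ᵥ (A *ᵥ y) := by
    conv_lhs => rw [hy, Matrix.mulVec_transpose, ← Matrix.dotProduct_mulVec]
    rw [hy, Matrix.mulVec_transpose]
  have h2 : (x ⬝ᵥ (A *ᵥ y)) ^ 2 ≤ (x ⬝ᵥ x) * ((A *ᵥ y) ⬝ᵥ (A *ᵥ y)) := by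
    have := Finset.sum_mul_sq_le_sq_mul_sq Finset.univ x (A *ᵥ y)
    simp only [dotProduct]
    calc (∑ i, x i * (A *ᵥ y) i) ^ 2 ≤ (∑ i, x i ^ 2) * (∑ i, (A *ᵥ y) i ^ 2) := this
    _ = (∑ i, x i * x i) * (∑ i, (A *ᵥ y) i * (A *ᵥ y) i) := by
        simp_rw [sq]
  have h3 := rayleigh A y
  rcases eq_or_lt_of_le h0 with he | hl
  · rw [← he]
    exact mul_nonneg (smaxSq_nonneg' A) hx0
  · nlinarith [h2, h3, h1, hl, hx0]

lemma fro_sq_eq {a b : ℕ} (A : Matrix (Fin a) (Fin b) ℝ) :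
    fro A ^ 2 = ∑ i, ∑ j, A i j ^ 2 :=
  Real.sq_sqrt (Finset.sum_nonneg fun i _ => Finset.sum_nonneg fun j _ => sq_nonneg _)

lemma fro_mul_le {p q r : ℕ} (B : Matrix (Fin p) (Fin q) ℝ) (A : Matrix (Fin q) (Fin r) ℝ) :
    fro (B * A) ^ 2 ≤ smaxSq A * fro B ^ 2 := by
  rw [fro_sq_eq, fro_sq_eq, Finset.mul_sum]
  refine Finset.sum_le_sum fun i _ => ?_
  have h := quadT A (B i)
  have hrow : ∑ k, (B * A) i k ^ 2 = (Aᵀ *ᵥ B i) ⬝ᵥ (Aᵀ *ᵥ B i) := by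
    simp only [dotProduct, Matrix.mulVec, Matrix.mul_apply, Matrix.transpose_apply]
    refine Finset.sum_congr rfl fun k _ => ?_
    rw [sq]
    congr 1 <;> exact Finset.sum_congr rfl fun j _ => mul_comm _ _
  have hx : (B i) ⬝ᵥ (B i) = ∑ j, B i j ^ 2 := by
    simp [dotProduct, sq]
  calc ∑ k, (B * A) i k ^ 2 = (Aᵀ *ᵥ B i) ⬝ᵥ (Aᵀ *ᵥ B i) := hrow
  _ ≤ smaxSq A * ((B i) ⬝ᵥ (B i)) := h
  _ = smaxSq A * ∑ j, B i j ^ 2 := by rw [hx]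

lemma fro_transpose' {a b : ℕ} (A : Matrix (Fin a) (Fin b) ℝ) : fro Aᵀ = fro A := by
  rw [fro_eq_norm, fro_eq_norm, Matrix.frobenius_norm_transpose]

/-- One GD step on `L(W₁,W₂) = ℓ(W₁W₂ᵀ)`: with `G = ∇ℓ(W₁W₂ᵀ)`,
`W₁⁺ = W₁ − ηGW₂`, `W₂⁺ = W₂ − ηGᵀW₁`, the imbalance `D = W₁ᵀW₁ − W₂ᵀW₂` satisfies
`D⁺ − D = η²(W₂ᵀGᵀGW₂ − W₁ᵀGGᵀW₁)` and
`‖D⁺ − D‖_F ≤ η²(σ_max(W₁)² + σ_max(W₂)²)‖G‖_F²`. -/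
theorem stmt11 (n m h : ℕ) (η : ℝ)
    (g : Matrix (Fin n) (Fin m) ℝ → Matrix (Fin n) (Fin m) ℝ)
    (W₁ : Matrix (Fin n) (Fin h) ℝ) (W₂ : Matrix (Fin m) (Fin h) ℝ)
    (G : Matrix (Fin n) (Fin m) ℝ) (hG : G = g (W₁ * W₂ᵀ))
    (W₁' : Matrix (Fin n) (Fin h) ℝ) (hW₁' : W₁' = W₁ - η • (G * W₂))
    (W₂' : Matrix (Fin m) (Fin h) ℝ) (hW₂' : W₂' = W₂ - η • (Gᵀ * W₁)) :
    (W₁'ᵀ * W₁' - W₂'ᵀ * W₂') - (W₁ᵀ * W₁ - W₂ᵀ * W₂)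
      = η ^ 2 • (W₂ᵀ * Gᵀ * G * W₂ - W₁ᵀ * G * Gᵀ * W₁) ∧
    fro ((W₁'ᵀ * W₁' - W₂'ᵀ * W₂') - (W₁ᵀ * W₁ - W₂ᵀ * W₂))
      ≤ η ^ 2 * (smaxSq W₁ + smaxSq W₂) * fro G ^ 2 := by
  have key : (W₁'ᵀ * W₁' - W₂'ᵀ * W₂') - (W₁ᵀ * W₁ - W₂ᵀ * W₂)
      = η ^ 2 • (W₂ᵀ * Gᵀ * G * W₂ - W₁ᵀ * G * Gᵀ * W₁) := by
    subst hW₁' hW₂'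
    simp only [Matrix.transpose_sub, Matrix.transpose_smul, Matrix.transpose_mul,
      Matrix.transpose_transpose, Matrix.sub_mul, Matrix.mul_sub, smul_sub,
      Matrix.smul_mul, Matrix.mul_smul, smul_smul, Matrix.mul_assoc]
    module
  refine ⟨key, ?_⟩
  rw [key]
  have hE : W₂ᵀ * Gᵀ * G * W₂ = (G * W₂)ᵀ * (G * W₂) := by
    simp [Matrix.transpose_mul, Matrix.mul_assoc]
  have hF : W₁ᵀ * G * Gᵀ * W₁ = (Gᵀ * W₁)ᵀ * (Gᵀ * W₁) := by
    simp [Matrix.transpose_mul, Matrix.mul_assoc]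
  have e1 : fro ((G * W₂)ᵀ * (G * W₂)) ≤ smaxSq W₂ * fro G ^ 2 := by
    calc fro ((G * W₂)ᵀ * (G * W₂)) = ‖(G * W₂)ᵀ * (G * W₂)‖ := fro_eq_norm _
    _ ≤ ‖(G * W₂)ᵀ‖ * ‖G * W₂‖ := Matrix.frobenius_norm_mul _ _
    _ = fro (G * W₂) ^ 2 := by
        rw [Matrix.frobenius_norm_transpose, ← fro_eq_norm]; ring
    _ ≤ smaxSq W₂ * fro G ^ 2 := fro_mul_le G W₂
  have e2 : fro ((Gᵀ * W₁)ᵀ * (Gᵀ * W₁)) ≤ smaxSq W₁ * fro G ^ 2 := by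
    calc fro ((Gᵀ * W₁)ᵀ * (Gᵀ * W₁)) = ‖(Gᵀ * W₁)ᵀ * (Gᵀ * W₁)‖ := fro_eq_norm _
    _ ≤ ‖(Gᵀ * W₁)ᵀ‖ * ‖Gᵀ * W₁‖ := Matrix.frobenius_norm_mul _ _
    _ = fro (Gᵀ * W₁) ^ 2 := by
        rw [Matrix.frobenius_norm_transpose, ← fro_eq_norm]; ring
    _ ≤ smaxSq W₁ * fro Gᵀ ^ 2 := fro_mul_le Gᵀ W₁
    _ = smaxSq W₁ * fro G ^ 2 := by rw [fro_transpose']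
  calc fro (η ^ 2 • (W₂ᵀ * Gᵀ * G * W₂ - W₁ᵀ * G * Gᵀ * W₁))
      = ‖η ^ 2 • (W₂ᵀ * Gᵀ * G * W₂ - W₁ᵀ * G * Gᵀ * W₁)‖ := fro_eq_norm _
    _ = |η ^ 2| * ‖W₂ᵀ * Gᵀ * G * W₂ - W₁ᵀ * G * Gᵀ * W₁‖ := by
        rw [norm_smul, Real.norm_eq_abs]
    _ = η ^ 2 * ‖W₂ᵀ * Gᵀ * G * W₂ - W₁ᵀ * G * Gᵀ * W₁‖ := by
        rw [abs_of_nonneg (sq_nonneg η)]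
    _ ≤ η ^ 2 * (‖W₂ᵀ * Gᵀ * G * W₂‖ + ‖W₁ᵀ * G * Gᵀ * W₁‖) :=
        mul_le_mul_of_nonneg_left (norm_sub_le _ _) (sq_nonneg η)
    _ = η ^ 2 * (fro (W₂ᵀ * Gᵀ * G * W₂) + fro (W₁ᵀ * G * Gᵀ * W₁)) := by
        rw [fro_eq_norm, fro_eq_norm]
    _ ≤ η ^ 2 * (smaxSq W₂ * fro G ^ 2 + smaxSq W₁ * fro G ^ 2) := by
        refine mul_le_mul_of_nonneg_left ?_ (sq_nonneg η)
        rw [hE, hF]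
        exact add_le_add e1 e2
    _ = η ^ 2 * (smaxSq W₁ + smaxSq W₂) * fro G ^ 2 := by ring
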